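/- arXiv:2204.10952 — 4 statements merged into one kernel-verified Lean document; each statement's English description precedes it below -/
import Mathlib

section
/- Under Assumption A (see context), in dimension 1 with unit scale, the function F(t) := ∫_ℝ f(p̃((x−t)²)/p̃(x²)) p̃(x²) dx is differentiable and F′(t) > 0 for every t > 0. -/
open MeasureTheory Set Function intervalIntegral

namespace FAux

noncomputable def hh (p f : ℝ → ℝ) (x s : ℝ) : ℝ :=
  deriv f (p ((x - s) ^ 2) / p (x ^ 2)) * deriv p ((x - s) ^ 2) * (-2 * (x - s))

noncomputable def qq (p f : ℝ → ℝ) (y s : ℝ) : ℝ :=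
  deriv f (p (y ^ 2) / p ((y + s) ^ 2)) * deriv p (y ^ 2) * (-2 * y)

noncomputable def ph (p f : ℝ → ℝ) (y t : ℝ) : ℝ :=
  |deriv f (p (y ^ 2) / p ((y + t) ^ 2))| * |deriv p (y ^ 2)| * |y|

variable {p f : ℝ → ℝ}

theorem ratio_pos (hppos : ∀ u : ℝ, 0 ≤ u → 0 < p u) (a b : ℝ) :
    0 < p (a ^ 2) / p (b ^ 2) :=
  div_pos (hppos _ (sq_nonneg _)) (hppos _ (sq_nonneg _))

theorem contderivf (hf2 : ContDiffOn ℝ 2 f (Set.Ioi 0)) :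
    ContinuousOn (deriv f) (Set.Ioi 0) :=
  hf2.continuousOn_deriv_of_isOpen isOpen_Ioi (by norm_num)

theorem qq_eq_hh (y s : ℝ) : qq p f y s = hh p f (y + s) s := by
  simp [qq, hh, add_sub_cancel_right]

theorem hh_eq_qq (x s : ℝ) : hh p f x s = qq p f (x - s) s := by
  simp [qq, hh, sub_add_cancel]

theorem abs_qq (y s : ℝ) : |qq p f y s| = 2 * ph p f y s := by
  have h2 : |(-2 : ℝ)| = 2 := by norm_num
  simp only [qq, ph, abs_mul, h2]
  ring

theorem ph_nonneg (y t : ℝ) : 0 ≤ ph p f y t := by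
  simp only [ph]; positivity

theorem le_biSup_real {φ : ℝ → ℝ} {K : Set ℝ} (hb : BddAbove (φ '' K))
    (hnn : ∀ u, 0 ≤ φ u) {s : ℝ} (hs : s ∈ K) : φ s ≤ ⨆ t ∈ K, φ t := by
  have h1 : φ s ≤ ⨆ i : K, φ i := le_ciSup_set hb hs
  have hr : BddAbove (Set.range fun i : K => φ i) := by
    rwa [← Set.image_eq_range]
  rwa [ciSup_subtype_fun hr
    (by rw [Real.sSup_empty]; exact (hnn s).trans h1)] at h1

theorem hh_cont (hp1 : ContDiff ℝ 1 p) (hppos : ∀ u : ℝ, 0 ≤ u → 0 < p u)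
    (hf2 : ContDiffOn ℝ 2 f (Set.Ioi 0)) :
    Continuous fun z : ℝ × ℝ => hh p f z.1 z.2 := by
  have hcr : Continuous fun z : ℝ × ℝ => p ((z.1 - z.2) ^ 2) / p (z.1 ^ 2) :=
    Continuous.div (hp1.continuous.comp (by fun_prop)) (hp1.continuous.comp (by fun_prop))
      fun z => (hppos _ (sq_nonneg _)).ne'
  have h1 : Continuous fun z : ℝ × ℝ => deriv f (p ((z.1 - z.2) ^ 2) / p (z.1 ^ 2)) :=
    (contderivf hf2).comp_continuous hcr fun z => ratio_pos hppos _ _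
  have h2 : Continuous fun z : ℝ × ℝ => deriv p ((z.1 - z.2) ^ 2) :=
    (hp1.continuous_deriv le_rfl).comp (by fun_prop)
  exact (h1.mul h2).mul (by fun_prop)

theorem qq_cont (hp1 : ContDiff ℝ 1 p) (hppos : ∀ u : ℝ, 0 ≤ u → 0 < p u)
    (hf2 : ContDiffOn ℝ 2 f (Set.Ioi 0)) :
    Continuous fun z : ℝ × ℝ => qq p f z.1 z.2 := by
  have hcr : Continuous fun z : ℝ × ℝ => p (z.1 ^ 2) / p ((z.1 + z.2) ^ 2) :=
    Continuous.div (hp1.continuous.comp (by fun_prop)) (hp1.continuous.comp (by fun_prop))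
      fun z => (hppos _ (sq_nonneg _)).ne'
  have h1 : Continuous fun z : ℝ × ℝ => deriv f (p (z.1 ^ 2) / p ((z.1 + z.2) ^ 2)) :=
    (contderivf hf2).comp_continuous hcr fun z => ratio_pos hppos _ _
  have h2 : Continuous fun z : ℝ × ℝ => deriv p (z.1 ^ 2) :=
    (hp1.continuous_deriv le_rfl).comp (by fun_prop)
  exact (h1.mul h2).mul (by fun_prop)

theorem ph_cont (hp1 : ContDiff ℝ 1 p) (hppos : ∀ u : ℝ, 0 ≤ u → 0 < p u)
    (hf2 : ContDiffOn ℝ 2 f (Set.Ioi 0)) (y : ℝ) :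
    Continuous fun t => ph p f y t := by
  have hcr : Continuous fun t : ℝ => p (y ^ 2) / p ((y + t) ^ 2) :=
    Continuous.div (by fun_prop) (hp1.continuous.comp (by fun_prop))
      fun z => (hppos _ (sq_nonneg _)).ne'
  have h1 : Continuous fun t : ℝ => deriv f (p (y ^ 2) / p ((y + t) ^ 2)) :=
    (contderivf hf2).comp_continuous hcr fun z => ratio_pos hppos _ _
  exact (h1.abs.mul continuous_const).mul continuous_const

theorem ph_le_sup (hp1 : ContDiff ℝ 1 p) (hppos : ∀ u : ℝ, 0 ≤ u → 0 < p u)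
    (hf2 : ContDiffOn ℝ 2 f (Set.Ioi 0)) {K : Set ℝ} (hK : IsCompact K) {s : ℝ}
    (hs : s ∈ K) (y : ℝ) :
    ph p f y s ≤ ⨆ t ∈ K, ph p f y t :=
  le_biSup_real ((hK.image (ph_cont hp1 hppos hf2 y)).bddAbove)
    (fun u => ph_nonneg y u) hs

theorem hasDeriv (hp1 : ContDiff ℝ 1 p) (hppos : ∀ u : ℝ, 0 ≤ u → 0 < p u)
    (hf2 : ContDiffOn ℝ 2 f (Set.Ioi 0)) (x s : ℝ) :
    HasDerivAt (fun s => f (p ((x - s) ^ 2) / p (x ^ 2)) * p (x ^ 2)) (hh p f x s) s := by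
  have hc : 0 < p (x ^ 2) := hppos _ (sq_nonneg _)
  have hr : 0 < p ((x - s) ^ 2) / p (x ^ 2) := ratio_pos hppos _ _
  have h1 : HasDerivAt (fun s : ℝ => x - s) (-1) s := by
    simpa using (hasDerivAt_id s).const_sub x
  have h2 := h1.pow 2
  have hpd : HasDerivAt p (deriv p ((x - s) ^ 2)) ((x - s) ^ 2) :=
    (hp1.differentiable one_ne_zero ((x - s) ^ 2)).hasDerivAt
  have h4 := (hpd.comp s h2).div_const (p (x ^ 2))
  have hfd : HasDerivAt f (deriv f (p ((x - s) ^ 2) / p (x ^ 2)))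
      (p ((x - s) ^ 2) / p (x ^ 2)) :=
    ((hf2.differentiableOn (by norm_num)).differentiableAt
      (isOpen_Ioi.mem_nhds hr)).hasDerivAt
  have h7 := (hfd.comp s h4).mul_const (p (x ^ 2))
  have e : ∀ A B c : ℝ, c ≠ 0 → A * (B / c) * c = A * B := fun A B c hcne => by
    field_simp
  rw [e _ _ _ hc.ne'] at h7
  refine h7.congr_deriv ?_
  simp only [hh]
  push_cast
  ring

end FAux

theorem F_differentiable_and_strict_increase (ptilde : ℝ → ℝ)
    (hp_smooth : ContDiff ℝ 1 ptilde)
    (hp_pos : ∀ u : ℝ, 0 ≤ u → 0 < ptilde u)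
    (hp_deriv_neg : ∀ u : ℝ, 0 ≤ u → deriv ptilde u < 0)
    (hp_prob : ∫ x : ℝ, ptilde (x ^ 2) = 1)
    (f : ℝ → ℝ) (hf_smooth : ContDiffOn ℝ 2 f (Set.Ioi 0))
    (hf1 : f 1 = 0) (hf'' : ∀ u : ℝ, 0 < u → 0 < iteratedDeriv 2 f u)
    (hint : ∀ t : ℝ,
      Integrable (fun x : ℝ => f (ptilde ((x - t) ^ 2) / ptilde (x ^ 2)) * ptilde (x ^ 2)))
    (hdom : ∀ K : Set ℝ, IsCompact K →
      Integrable (fun y : ℝ =>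
        ⨆ t ∈ K, |deriv f (ptilde (y ^ 2) / ptilde ((y + t) ^ 2))| *
          |deriv ptilde (y ^ 2)| * |y|)) :
    Differentiable ℝ
        (fun t : ℝ => ∫ x : ℝ, f (ptilde ((x - t) ^ 2) / ptilde (x ^ 2)) * ptilde (x ^ 2)) ∧
      ∀ t : ℝ, 0 < t →
        0 < deriv
          (fun t : ℝ => ∫ x : ℝ, f (ptilde ((x - t) ^ 2) / ptilde (x ^ 2)) * ptilde (x ^ 2))
          t := by
  have hp1 := hp_smooth
  have hppos := hp_pos
  have hf2 := hf_smooth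
  set F : ℝ → ℝ :=
    fun t => ∫ x : ℝ, f (ptilde ((x - t) ^ 2) / ptilde (x ^ 2)) * ptilde (x ^ 2) with hFdef
  set g : ℝ → ℝ := fun s => ∫ y : ℝ, FAux.qq ptilde f y s with hgdef
  have hdom' : ∀ K : Set ℝ, IsCompact K →
      Integrable (fun y => ⨆ t ∈ K, FAux.ph ptilde f y t) := fun K hK => hdom K hK
  have hqcont := FAux.qq_cont hp1 hppos hf2
  have hhcont := FAux.hh_cont hp1 hppos hf2
  -- continuity of g
  have g_cont : Continuous g := by
    rw [continuous_iff_continuousAt]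
    intro s₀
    have hK : IsCompact (Metric.closedBall s₀ 1) := isCompact_closedBall _ _
    apply continuousAt_of_dominated
      (bound := fun y => 2 * ⨆ t ∈ Metric.closedBall s₀ 1, FAux.ph ptilde f y t)
    · exact Filter.Eventually.of_forall fun s =>
        (hqcont.comp (continuous_id.prodMk continuous_const)).aestronglyMeasurable
    · filter_upwards [Metric.closedBall_mem_nhds s₀ one_pos] with s hs
      refine ae_of_all _ fun y => ?_
      rw [Real.norm_eq_abs, FAux.abs_qq]
      exact mul_le_mul_of_nonneg_left (FAux.ph_le_sup hp1 hppos hf2 hK hs y) (by norm_num)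
    · exact (hdom' _ hK).const_mul 2
    · exact ae_of_all _ fun y =>
        (hqcont.comp (continuous_const.prodMk continuous_id)).continuousAt
  -- the key identity
  have key : ∀ a b : ℝ, a ≤ b → F b - F a = ∫ s in a..b, g s := by
    intro a b hab
    have hKc : IsCompact (Icc a b) := isCompact_Icc
    set Φ : ℝ → ℝ := fun y => 2 * ⨆ t ∈ Icc a b, FAux.ph ptilde f y t with hPhidef
    have hΦi : Integrable Φ := (hdom' _ hKc).const_mul 2
    have hhbound : ∀ s ∈ Icc a b, ∀ x : ℝ, ‖FAux.hh ptilde f x s‖ ≤ Φ (x - s) := by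
      intro s hs x
      rw [Real.norm_eq_abs, FAux.hh_eq_qq, FAux.abs_qq]
      exact mul_le_mul_of_nonneg_left
        (FAux.ph_le_sup hp1 hppos hf2 hKc hs (x - s)) (by norm_num)
    have hslice : ∀ s ∈ Icc a b, Integrable (fun x => FAux.hh ptilde f x s) := by
      intro s hs
      refine Integrable.mono' (hΦi.comp_sub_right s)
        ((hhcont.comp (continuous_id.prodMk continuous_const)).aestronglyMeasurable)
        (ae_of_all _ fun x => hhbound s hs x)
    have ftc : ∀ x : ℝ,
        (∫ s in a..b, FAux.hh ptilde f x s) =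
          f (ptilde ((x - b) ^ 2) / ptilde (x ^ 2)) * ptilde (x ^ 2) -
            f (ptilde ((x - a) ^ 2) / ptilde (x ^ 2)) * ptilde (x ^ 2) := by
      intro x
      exact integral_eq_sub_of_hasDerivAt (fun s _ => FAux.hasDeriv hp1 hppos hf2 x s)
        ((hhcont.comp (continuous_const.prodMk continuous_id)).intervalIntegrable a b)
    have hmeas : AEStronglyMeasurable (Function.uncurry fun s x => FAux.hh ptilde f x s)
        ((volume.restrict (Ioc a b)).prod volume) :=
      (hhcont.comp (continuous_snd.prodMk continuous_fst)).aestronglyMeasurable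
    have hprod : Integrable (Function.uncurry fun s x => FAux.hh ptilde f x s)
        ((volume.restrict (Ioc a b)).prod volume) := by
      rw [integrable_prod_iff hmeas]
      constructor
      · filter_upwards [ae_restrict_mem measurableSet_Ioc] with s hs
        exact hslice s (Ioc_subset_Icc_self hs)
      · have hCint : Integrable (fun _ : ℝ => ∫ y, Φ y)
            (volume.restrict (Ioc a b)) :=
          integrableOn_const measure_Ioc_lt_top.ne
        refine Integrable.mono' hCint hmeas.norm.integral_prod_right' ?_
        filter_upwards [ae_restrict_mem measurableSet_Ioc] with s hs
        have h2 : Integrable (fun x => ‖FAux.hh ptilde f x s‖) :=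
          (hslice s (Ioc_subset_Icc_self hs)).norm
        have h3 : (∫ x : ℝ, ‖FAux.hh ptilde f x s‖) ≤ ∫ x : ℝ, Φ (x - s) :=
          integral_mono h2 (hΦi.comp_sub_right s)
            (fun x => hhbound s (Ioc_subset_Icc_self hs) x)
        have h4 : (∫ x : ℝ, Φ (x - s)) = ∫ y, Φ y :=
          integral_sub_right_eq_self Φ s
        rw [Real.norm_of_nonneg (integral_nonneg fun x => norm_nonneg _)]
        calc (∫ x : ℝ, ‖Function.uncurry (fun s x => FAux.hh ptilde f x s) (s, x)‖)
            = ∫ x : ℝ, ‖FAux.hh ptilde f x s‖ := rfl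
          _ ≤ ∫ y, Φ y := h4 ▸ h3
    have swap := integral_integral_swap hprod
    have trans : ∀ s : ℝ, (∫ x : ℝ, FAux.hh ptilde f x s) = g s := by
      intro s
      have := integral_sub_right_eq_self (μ := volume) (fun y => FAux.qq ptilde f y s) s
      simp_rw [← FAux.hh_eq_qq] at this
      exact this
    calc F b - F a
        = ∫ x : ℝ, (f (ptilde ((x - b) ^ 2) / ptilde (x ^ 2)) * ptilde (x ^ 2) -
            f (ptilde ((x - a) ^ 2) / ptilde (x ^ 2)) * ptilde (x ^ 2)) :=
          (integral_sub (hint b) (hint a)).symm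
      _ = ∫ x : ℝ, ∫ s in a..b, FAux.hh ptilde f x s := by
          congr 1; funext x; rw [ftc x]
      _ = ∫ x : ℝ, ∫ s in Ioc a b, FAux.hh ptilde f x s := by
          congr 1; funext x; rw [intervalIntegral.integral_of_le hab]
      _ = ∫ s in Ioc a b, ∫ x : ℝ, FAux.hh ptilde f x s := swap.symm
      _ = ∫ s in Ioc a b, g s := by
          congr 1; funext s; rw [trans s]
      _ = ∫ s in a..b, g s := (intervalIntegral.integral_of_le hab).symm
  have hFt : ∀ t : ℝ, F t = F 0 + ∫ s in (0:ℝ)..t, g s := by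
    intro t
    rcases le_total 0 t with h | h
    · have := key 0 t h; linarith
    · have h1 := key t 0 h
      have h2 : (∫ s in t..(0:ℝ), g s) = -∫ s in (0:ℝ)..t, g s :=
        intervalIntegral.integral_symm 0 t
      linarith
  have hFd : ∀ t : ℝ, HasDerivAt F (g t) t := by
    intro t
    have h1 : HasDerivAt (fun u => ∫ s in (0:ℝ)..u, g s) (g t) t :=
      intervalIntegral.integral_hasDerivAt_right (g_cont.intervalIntegrable _ _)
        (g_cont.stronglyMeasurableAtFilter _ _) g_cont.continuousAt
    have h2 := h1.const_add (F 0)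
    have hFe : F = fun u => F 0 + ∫ s in (0:ℝ)..u, g s := funext hFt
    rw [hFe]
    exact h2
  -- positivity of g
  have hanti : StrictAntiOn ptilde (Ici 0) :=
    strictAntiOn_of_deriv_neg (convex_Ici 0) hp1.continuous.continuousOn
      (fun x hx => hp_deriv_neg x (by rw [interior_Ici] at hx; exact hx.le))
  have hmono : StrictMonoOn (deriv f) (Ioi 0) :=
    strictMonoOn_of_deriv_pos (convex_Ioi 0) (FAux.contderivf hf2)
      (fun x hx => by
        rw [interior_Ioi] at hx
        have := hf'' x hx
        rwa [iteratedDeriv_succ, iteratedDeriv_one] at this)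
  have gpos : ∀ t : ℝ, 0 < t → 0 < g t := by
    intro t ht
    have htK : t ∈ Icc (-t) t := ⟨by linarith, le_rfl⟩
    have hqi : Integrable (fun y => FAux.qq ptilde f y t) := by
      refine Integrable.mono'
        (g := fun y => 2 * ⨆ t' ∈ Icc (-t) t, FAux.ph ptilde f y t')
        ((hdom' (Icc (-t) t) isCompact_Icc).const_mul 2)
        ((hqcont.comp (continuous_id.prodMk continuous_const)).aestronglyMeasurable)
        (ae_of_all _ fun y => ?_)
      rw [Real.norm_eq_abs, FAux.abs_qq]
      exact mul_le_mul_of_nonneg_left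
        (FAux.ph_le_sup hp1 hppos hf2 isCompact_Icc htK y) (by norm_num)
    have hqneg : Integrable (fun y => FAux.qq ptilde f (-y) t) := hqi.comp_neg
    have split : g t = (∫ y in Iic (0:ℝ), FAux.qq ptilde f y t) +
        ∫ y in Ioi (0:ℝ), FAux.qq ptilde f y t :=
      (integral_Iic_add_Ioi hqi.integrableOn hqi.integrableOn).symm
    have hneg : (∫ y in Ioi (0:ℝ), FAux.qq ptilde f (-y) t) =
        ∫ y in Iic (0:ℝ), FAux.qq ptilde f y t := by
      simpa using integral_comp_neg_Ioi (0:ℝ) (fun y => FAux.qq ptilde f y t)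
    have hsum : g t = ∫ y in Ioi (0:ℝ),
        (FAux.qq ptilde f (-y) t + FAux.qq ptilde f y t) := by
      rw [split, ← hneg, ← integral_add hqneg.integrableOn hqi.integrableOn]
    have hpt : ∀ y ∈ Ioi (0:ℝ),
        0 < FAux.qq ptilde f (-y) t + FAux.qq ptilde f y t := by
      intro y hy
      have hy' : 0 < y := hy
      have hsq : (-y + t) ^ 2 < (y + t) ^ 2 := by nlinarith
      have hplt : ptilde ((y + t) ^ 2) < ptilde ((-y + t) ^ 2) :=
        hanti (Set.mem_Ici.2 (sq_nonneg _)) (Set.mem_Ici.2 (sq_nonneg _)) hsq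
      have hBA : ptilde (y ^ 2) / ptilde ((-y + t) ^ 2) <
          ptilde (y ^ 2) / ptilde ((y + t) ^ 2) :=
        div_lt_div_of_pos_left (hppos _ (sq_nonneg _)) (hppos _ (sq_nonneg _)) hplt
      have hfBA : deriv f (ptilde (y ^ 2) / ptilde ((-y + t) ^ 2)) <
          deriv f (ptilde (y ^ 2) / ptilde ((y + t) ^ 2)) :=
        hmono (FAux.ratio_pos hppos y (-y + t)) (FAux.ratio_pos hppos y (y + t)) hBA
      have hpneg : deriv ptilde (y ^ 2) < 0 := hp_deriv_neg _ (sq_nonneg _)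
      simp only [FAux.qq, neg_sq, neg_mul, mul_neg, neg_neg]
      nlinarith [mul_pos (mul_pos (by linarith : (0:ℝ) < 2 * y)
        (by linarith : (0:ℝ) < -deriv ptilde (y ^ 2)))
        (by linarith : (0:ℝ) < deriv f (ptilde (y ^ 2) / ptilde ((y + t) ^ 2)) -
          deriv f (ptilde (y ^ 2) / ptilde ((-y + t) ^ 2)))]
    rw [hsum]
    have hnn : 0 ≤ᵐ[volume.restrict (Ioi (0:ℝ))]
        fun y => FAux.qq ptilde f (-y) t + FAux.qq ptilde f y t :=
      (ae_restrict_iff' measurableSet_Ioi).2 (ae_of_all _ fun y hy => (hpt y hy).le)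
    have hfi : IntegrableOn (fun y => FAux.qq ptilde f (-y) t + FAux.qq ptilde f y t)
        (Ioi (0:ℝ)) := hqneg.integrableOn.add hqi.integrableOn
    refine (setIntegral_pos_iff_support_of_nonneg_ae hnn hfi).2 ?_
    have hsub : Ioi (0:ℝ) ⊆ Function.support
        (fun y => FAux.qq ptilde f (-y) t + FAux.qq ptilde f y t) :=
      fun y hy => (hpt y hy).ne'
    calc (0:ENNReal) < volume (Ioi (0:ℝ)) := by simp [Real.volume_Ioi]
      _ = volume (Function.support
            (fun y => FAux.qq ptilde f (-y) t + FAux.qq ptilde f y t) ∩ Ioi 0) := by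
          rw [Set.inter_eq_right.2 hsub]
      _ = _ := rfl
  exact ⟨fun t => (hFd t).differentiableAt, fun t ht => by
    rw [(hFd t).deriv]; exact gpos t ht⟩
end

section
/- Let p(x) = p̃(‖x‖²) be a spherically symmetric density on ℝ^d and p_{0,Σ}(x) := det(Σ)^{-1/2} p̃(xᵀΣ⁻¹x). Then for positive-definite Σ₁, Σ₂, the f-divergence I_f(p_{0,Σ₁} : p_{0,Σ₂}) equals ∫_{ℝ^d} f((λ₁⋯λ_d)^{1/2} p̃(λ₁y₁² + ⋯ + λ_d y_d²)/p̃(‖y‖²)) p̃(‖y‖²) dy, where λ₁,…,λ_d are the eigenvalues of Σ₁Σ₂⁻¹; in particular I_f depends only on these eigenvalues. -/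
open MeasureTheory Matrix Polynomial

/-- Density of the centered scale family generated by the spherical standard density:
`p_{0,Σ}(x) = det(Σ)^{-1/2} p̃(xᵀΣ⁻¹x)`. -/
noncomputable def scaleDensity (d : ℕ) (ptilde : ℝ → ℝ)
    (S : Matrix (Fin d) (Fin d) ℝ) (x : Fin d → ℝ) : ℝ :=
  (Real.sqrt S.det)⁻¹ * ptilde (x ⬝ᵥ (S⁻¹ *ᵥ x))

private lemma my_charpoly_diagonal {n : ℕ} (v : Fin n → ℝ) :
    (Matrix.diagonal v).charpoly = ∏ i, (X - C (v i)) := by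
  classical
  have h : (Matrix.diagonal v).charmatrix
      = Matrix.diagonal (fun i => (X : ℝ[X]) - C (v i)) := by
    ext i j
    by_cases hij : i = j
    · subst hij; simp [Matrix.charmatrix_apply_eq]
    · simp [Matrix.charmatrix_apply_ne _ _ _ hij, Matrix.diagonal_apply_ne _ hij]
  rw [Matrix.charpoly, h, Matrix.det_diagonal]

private lemma my_charpoly_conj {n : ℕ} (P A : Matrix (Fin n) (Fin n) ℝ) (hP : IsUnit P.det) :
    (P * A * P⁻¹).charpoly = A.charpoly := by
  classical
  have hPP : P * P⁻¹ = 1 := Matrix.mul_nonsing_inv P hP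
  have hmap1 : (P.map (C : ℝ →+* ℝ[X])) * (P⁻¹.map (C : ℝ →+* ℝ[X])) = 1 := by
    rw [← Matrix.map_mul, hPP, Matrix.map_one _ (map_zero C) (map_one C)]
  have hkey : Matrix.charmatrix (P * A * P⁻¹)
      = (P.map (C : ℝ →+* ℝ[X])) * A.charmatrix * (P⁻¹.map (C : ℝ →+* ℝ[X])) := by
    rw [Matrix.charmatrix, Matrix.charmatrix, Matrix.mul_sub, Matrix.sub_mul]
    have hc := (Matrix.scalar_commute (X : ℝ[X]) (fun r => Commute.all X r)
      (P.map (C : ℝ →+* ℝ[X]))).eq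
    congr 1
    · rw [← hc, mul_assoc, hmap1, mul_one]
    · simp only [RingHom.mapMatrix_apply]
      rw [Matrix.map_mul, Matrix.map_mul]
  rw [Matrix.charpoly, Matrix.charpoly, hkey, Matrix.det_mul, Matrix.det_mul]
  have hdet : (P.map (C : ℝ →+* ℝ[X])).det * (P⁻¹.map (C : ℝ →+* ℝ[X])).det = 1 := by
    rw [← Matrix.det_mul, hmap1, Matrix.det_one]
  calc (P.map (C : ℝ →+* ℝ[X])).det * (A.charmatrix).det * (P⁻¹.map (C : ℝ →+* ℝ[X])).det
      = (A.charmatrix).det * ((P.map (C : ℝ →+* ℝ[X])).det * (P⁻¹.map (C : ℝ →+* ℝ[X])).det) := by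
        ring
    _ = (A.charmatrix).det := by rw [hdet, mul_one]

private lemma exists_comp_perm_eq {n : ℕ} (f g : Fin n → ℝ)
    (h : Multiset.map f Finset.univ.val = Multiset.map g Finset.univ.val) :
    ∃ σ : Equiv.Perm (Fin n), g ∘ σ = f := by
  classical
  have key : ∀ (F : Fin n → ℝ) (c : ℝ),
      Multiset.count c (Multiset.map F Finset.univ.val) = Fintype.card {a // c = F a} := by
    intro F c
    rw [Multiset.count_map, Fintype.card_subtype, ← Finset.filter_val]
    rfl
  have hcard : ∀ c : ℝ, Fintype.card {a : Fin n // f a = c} = Fintype.card {b : Fin n // g b = c} := by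
    intro c
    have hc := congrArg (Multiset.count c) h
    rw [key, key] at hc
    calc Fintype.card {a : Fin n // f a = c}
        = Fintype.card {a : Fin n // c = f a} :=
          Fintype.card_congr (Equiv.subtypeEquivRight fun a => eq_comm)
      _ = Fintype.card {b : Fin n // c = g b} := hc
      _ = Fintype.card {b : Fin n // g b = c} :=
          Fintype.card_congr (Equiv.subtypeEquivRight fun b => eq_comm)
  refine ⟨Equiv.ofFiberEquiv (f := f) (g := g) (fun c => Fintype.equivOfCardEq (hcard c)), ?_⟩
  funext a
  exact Equiv.ofFiberEquiv_map (fun c => Fintype.equivOfCardEq (hcard c)) a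

theorem fDiv_scale_family_spectral (d : ℕ) (ptilde : ℝ → ℝ)
    (hp_meas : Measurable ptilde) (hp_pos : ∀ u : ℝ, 0 ≤ u → 0 < ptilde u)
    (hp_prob : ∫ x : Fin d → ℝ, ptilde (x ⬝ᵥ x) = 1)
    (f : ℝ → ℝ) (hf_meas : Measurable f)
    (S₁ S₂ : Matrix (Fin d) (Fin d) ℝ) (hS₁ : S₁.PosDef) (hS₂ : S₂.PosDef)
    (lam : Fin d → ℝ)
    (hlam : (S₁ * S₂⁻¹).charpoly = ∏ i, (X - C (lam i)))
    (hint : Integrable (fun x : Fin d → ℝ =>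
      scaleDensity d ptilde S₁ x * f (scaleDensity d ptilde S₂ x / scaleDensity d ptilde S₁ x))) :
    ∫ x : Fin d → ℝ,
        scaleDensity d ptilde S₁ x *
          f (scaleDensity d ptilde S₂ x / scaleDensity d ptilde S₁ x) =
      ∫ y : Fin d → ℝ,
        f (Real.sqrt (∏ i, lam i) * ptilde (∑ i, lam i * y i ^ 2) / ptilde (∑ i, y i ^ 2)) *
          ptilde (∑ i, y i ^ 2) := by
  classical
  set B := (open scoped MatrixOrder in CFC.sqrt S₁) with hB_def
  have hB_herm : B.IsHermitian := open scoped MatrixOrder in (CFC.sqrt_nonneg S₁).posSemidef.isHermitian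
  have hBB : B * B = S₁ := open scoped MatrixOrder in CFC.sqrt_mul_sqrt_self S₁ hS₁.posSemidef.nonneg
  have hBt : Bᵀ = B := by
    ext i j
    conv_rhs => rw [← hB_herm.eq]
    simp [Matrix.conjTranspose_apply]
  have hdet₁ : (0:ℝ) < S₁.det := hS₁.det_pos
  have hdet₂ : (0:ℝ) < S₂.det := hS₂.det_pos
  have hBdet_sq : B.det ^ 2 = S₁.det := by rw [sq, ← Matrix.det_mul, hBB]
  have hBdet_ne : B.det ≠ 0 := by
    intro h
    rw [h] at hBdet_sq
    simp at hBdet_sq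
    exact hdet₁.ne' hBdet_sq.symm
  have hBunit : IsUnit B.det := Ne.isUnit hBdet_ne
  have habsB : |B.det| = Real.sqrt S₁.det := by rw [← hBdet_sq, Real.sqrt_sq_eq_abs]
  set A := B * S₂⁻¹ * B with hA_def
  have hS₂inv : (S₂⁻¹).PosDef := hS₂.inv
  have hA_herm : A.IsHermitian := by
    show Aᴴ = A
    rw [hA_def]
    rw [Matrix.conjTranspose_mul, Matrix.conjTranspose_mul, hB_herm.eq, hS₂inv.isHermitian.eq,
      mul_assoc]
  set μ := hA_herm.eigenvalues with hμ_def
  set Uc : Matrix (Fin d) (Fin d) ℝ := (hA_herm.eigenvectorUnitary : Matrix (Fin d) (Fin d) ℝ)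
    with hUc_def
  have hstarU : star Uc = Ucᵀ := by
    ext i j
    simp [Matrix.star_apply, Matrix.transpose_apply]
  have hUUt : Uc * Ucᵀ = 1 := by
    have := Matrix.mem_unitaryGroup_iff.mp (hA_herm.eigenvectorUnitary).2
    rwa [hstarU] at this
  have hUtU : Ucᵀ * Uc = 1 := by
    have := Matrix.mem_unitaryGroup_iff'.mp (hA_herm.eigenvectorUnitary).2
    rwa [hstarU] at this
  have hdiag : Ucᵀ * A * Uc = Matrix.diagonal μ := by
    have h := hA_herm.conjStarAlgAut_star_eigenvectorUnitary
    simp only [Unitary.conjStarAlgAut_apply, Unitary.coe_star, star_star] at h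
    rw [hstarU] at h
    simpa using h
  -- characteristic polynomial computations
  have hUdet : IsUnit Uc.det := by
    apply IsUnit.of_mul_eq_one (Ucᵀ.det)
    rw [← Matrix.det_mul, hUUt, Matrix.det_one]
  have hA_cp : A.charpoly = ∏ i, (X - C (μ i)) := by
    have hUc_inv : Uc⁻¹ = Ucᵀ := Matrix.inv_eq_right_inv hUUt
    have hAc : A = Uc * Matrix.diagonal μ * Uc⁻¹ := by
      rw [hUc_inv, ← hdiag]
      calc A = (Uc * Ucᵀ) * A * (Uc * Ucᵀ) := by rw [hUUt, one_mul, mul_one]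
        _ = Uc * (Ucᵀ * A * Uc) * Ucᵀ := by simp only [mul_assoc]
    rw [hAc, my_charpoly_conj _ _ hUdet, my_charpoly_diagonal]
  have hSS_cp : (S₁ * S₂⁻¹).charpoly = A.charpoly := by
    have hSS : S₁ * S₂⁻¹ = B * A * B⁻¹ := by
      rw [hA_def]
      calc S₁ * S₂⁻¹ = (B * B) * S₂⁻¹ * (B * B⁻¹) := by
            rw [Matrix.mul_nonsing_inv _ hBunit, mul_one, hBB]
        _ = B * (B * S₂⁻¹ * B) * B⁻¹ := by simp only [mul_assoc]
    rw [hSS, my_charpoly_conj _ _ hBunit]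
  have hms : Multiset.map lam Finset.univ.val = Multiset.map μ Finset.univ.val := by
    have h1 : (∏ i, (X - C (lam i))) = ∏ i, (X - C (μ i)) := by
      rw [← hlam, hSS_cp, hA_cp]
    have e1 : (∏ i, (X - C (lam i)))
        = ((Finset.univ.val.map lam).map (fun a : ℝ => X - C a)).prod := by
      rw [Multiset.map_map]; rfl
    have e2 : (∏ i, (X - C (μ i)))
        = ((Finset.univ.val.map μ).map (fun a : ℝ => X - C a)).prod := by
      rw [Multiset.map_map]; rfl
    have h2 := congrArg Polynomial.roots (e1 ▸ e2 ▸ h1)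
    rwa [Polynomial.roots_multiset_prod_X_sub_C, Polynomial.roots_multiset_prod_X_sub_C] at h2
  obtain ⟨σ, hσ⟩ := exists_comp_perm_eq lam μ hms
  have hprod : ∏ i, lam i = S₁.det * S₂.det⁻¹ := by
    have h1 : ∏ i, lam i = ∏ i, μ i := by
      rw [Finset.prod_eq_multiset_prod, Finset.prod_eq_multiset_prod, hms]
    have h2 : A.det = ∏ i, μ i := by
      simpa using hA_herm.det_eq_prod_eigenvalues
    have h3 : A.det = S₁.det * S₂.det⁻¹ := by
      rw [hA_def, Matrix.det_mul, Matrix.det_mul, Matrix.det_nonsing_inv, Ring.inverse_eq_inv']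
      rw [← hBdet_sq]; ring
    rw [h1, ← h2, h3]
  -- the orthogonal matrix V and the change-of-variables matrix M
  set V : Matrix (Fin d) (Fin d) ℝ := Uc.submatrix id ⇑σ with hV_def
  have hVt : Vᵀ = Ucᵀ.submatrix ⇑σ id := by rw [hV_def, Matrix.transpose_submatrix]
  have hVtV : Vᵀ * V = 1 := by
    rw [hVt, hV_def]
    have h := Matrix.submatrix_mul_equiv Ucᵀ Uc ⇑σ (Equiv.refl (Fin d)) ⇑σ
    simp only [Equiv.coe_refl] at h
    rw [h, hUtU, Matrix.submatrix_one_equiv]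
  have hVAV : Vᵀ * A * V = Matrix.diagonal lam := by
    have h1 : Vᵀ * A = (Ucᵀ * A).submatrix ⇑σ id := by
      rw [hVt]
      have h := Matrix.submatrix_mul_equiv Ucᵀ A ⇑σ (Equiv.refl (Fin d)) id
      simpa using h
    rw [h1, hV_def]
    have h2 := Matrix.submatrix_mul_equiv (Ucᵀ * A) Uc ⇑σ (Equiv.refl (Fin d)) ⇑σ
    simp only [Equiv.coe_refl] at h2
    rw [h2, hdiag, Matrix.submatrix_diagonal_equiv]
    rw [show μ ∘ ⇑σ = lam from hσ]
  have hVdet : |V.det| = 1 := by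
    have h := congrArg Matrix.det hVtV
    rw [Matrix.det_mul, Matrix.det_one, Matrix.det_transpose] at h
    have hsq : V.det ^ 2 = 1 := by rw [sq]; exact h
    rw [← Real.sqrt_sq_eq_abs, hsq, Real.sqrt_one]
  set M : Matrix (Fin d) (Fin d) ℝ := B * V with hM_def
  have hMt : Mᵀ = Vᵀ * B := by rw [hM_def, Matrix.transpose_mul, hBt]
  have hBSB : B * S₁⁻¹ * B = 1 := by
    rw [← hBB, Matrix.mul_inv_rev]
    calc B * (B⁻¹ * B⁻¹) * B = (B * B⁻¹) * ((B⁻¹) * B) := by simp only [mul_assoc]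
      _ = 1 := by
        rw [Matrix.mul_nonsing_inv _ hBunit, Matrix.nonsing_inv_mul _ hBunit, one_mul]
  have hM1 : Mᵀ * S₁⁻¹ * M = 1 := by
    calc Mᵀ * S₁⁻¹ * M = Vᵀ * (B * S₁⁻¹ * B) * V := by
          rw [hMt, hM_def]; simp only [mul_assoc]
      _ = 1 := by rw [hBSB, mul_one, hVtV]
  have hM2 : Mᵀ * S₂⁻¹ * M = Matrix.diagonal lam := by
    calc Mᵀ * S₂⁻¹ * M = Vᵀ * (B * S₂⁻¹ * B) * V := by
          rw [hMt, hM_def]; simp only [mul_assoc]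
      _ = Matrix.diagonal lam := by rw [← hA_def, hVAV]
  have hMdet : |M.det| = Real.sqrt S₁.det := by
    rw [hM_def, Matrix.det_mul, abs_mul, habsB, hVdet, mul_one]
  have hsqrt₁_pos : 0 < Real.sqrt S₁.det := Real.sqrt_pos.mpr hdet₁
  have hMdet_ne : M.det ≠ 0 := by
    intro h
    rw [h, abs_zero] at hMdet
    exact hsqrt₁_pos.ne' hMdet.symm
  -- quadratic form computations
  have hq : ∀ (N : Matrix (Fin d) (Fin d) ℝ) (y : Fin d → ℝ),
      (M *ᵥ y) ⬝ᵥ (N *ᵥ (M *ᵥ y)) = y ⬝ᵥ ((Mᵀ * N * M) *ᵥ y) := by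
    intro N y
    rw [Matrix.dotProduct_mulVec, ← Matrix.vecMul_transpose, Matrix.vecMul_vecMul,
      ← Matrix.dotProduct_mulVec, Matrix.mulVec_vecMul, Matrix.transpose_transpose, ← mul_assoc]
  have hq1 : ∀ y : Fin d → ℝ, (M *ᵥ y) ⬝ᵥ (S₁⁻¹ *ᵥ (M *ᵥ y)) = ∑ i, y i ^ 2 := by
    intro y
    rw [hq, hM1, Matrix.one_mulVec]
    simp [dotProduct, sq]
  have hq2 : ∀ y : Fin d → ℝ, (M *ᵥ y) ⬝ᵥ (S₂⁻¹ *ᵥ (M *ᵥ y)) = ∑ i, lam i * y i ^ 2 := by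
    intro y
    rw [hq, hM2]
    simp only [dotProduct, Matrix.mulVec_diagonal]
    exact Finset.sum_congr rfl fun i _ => by ring
  -- measurability
  have hQmeas : ∀ S : Matrix (Fin d) (Fin d) ℝ,
      Measurable fun x : Fin d → ℝ => x ⬝ᵥ (S *ᵥ x) := by
    intro S
    simp only [dotProduct, Matrix.mulVec]
    exact Finset.measurable_sum _ fun i _ =>
      (measurable_pi_apply i).mul
        (Finset.measurable_sum _ fun j _ => measurable_const.mul (measurable_pi_apply j))
  have hmeas : Measurable (fun x : Fin d → ℝ =>
      scaleDensity d ptilde S₁ x *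
        f (scaleDensity d ptilde S₂ x / scaleDensity d ptilde S₁ x)) := by
    unfold scaleDensity
    exact (measurable_const.mul (hp_meas.comp (hQmeas S₁⁻¹))).mul
      (hf_meas.comp ((measurable_const.mul (hp_meas.comp (hQmeas S₂⁻¹))).div
        (measurable_const.mul (hp_meas.comp (hQmeas S₁⁻¹)))))
  have hTmeas : Measurable (Matrix.toLin' M) :=
    (LinearMap.continuous_of_finiteDimensional (Matrix.toLin' M)).measurable
  have hmap := Real.map_matrix_volume_pi_eq_smul_volume_pi (M := M) hMdet_ne
  set h : (Fin d → ℝ) → ℝ := fun x =>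
    scaleDensity d ptilde S₁ x *
      f (scaleDensity d ptilde S₂ x / scaleDensity d ptilde S₁ x) with hh_def
  have h1 : ∫ y, h y ∂(Measure.map (Matrix.toLin' M) volume) = ∫ x, h (M *ᵥ x) := by
    rw [MeasureTheory.integral_map hTmeas.aemeasurable hmeas.aestronglyMeasurable]
    simp only [Matrix.toLin'_apply]
  have h2 : ∫ y, h y ∂(Measure.map (Matrix.toLin' M) volume) = |M.det|⁻¹ * ∫ y, h y := by
    rw [hmap, MeasureTheory.integral_smul_measure, ENNReal.toReal_ofReal (abs_nonneg _),
      abs_inv, smul_eq_mul]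
  have habs_pos : 0 < |M.det| := abs_pos.mpr hMdet_ne
  have hmain : ∫ x, h x = |M.det| * ∫ x, h (M *ᵥ x) := by
    rw [← h1, h2, ← mul_assoc, mul_inv_cancel₀ habs_pos.ne', one_mul]
  have hsum_nonneg : ∀ y : Fin d → ℝ, (0:ℝ) ≤ ∑ i, y i ^ 2 := fun y =>
    Finset.sum_nonneg fun i _ => sq_nonneg _
  have hpt : ∀ y : Fin d → ℝ, |M.det| * h (M *ᵥ y) =
      f (Real.sqrt (∏ i, lam i) * ptilde (∑ i, lam i * y i ^ 2) / ptilde (∑ i, y i ^ 2)) *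
        ptilde (∑ i, y i ^ 2) := by
    intro y
    rw [hh_def]
    simp only [scaleDensity]
    rw [hq1 y, hq2 y, hMdet]
    have hratio : ((Real.sqrt S₂.det)⁻¹ * ptilde (∑ i, lam i * y i ^ 2)) /
        ((Real.sqrt S₁.det)⁻¹ * ptilde (∑ i, y i ^ 2)) =
        Real.sqrt (∏ i, lam i) * ptilde (∑ i, lam i * y i ^ 2) / ptilde (∑ i, y i ^ 2) := by
      have hsq : Real.sqrt (∏ i, lam i) = (Real.sqrt S₂.det)⁻¹ * Real.sqrt S₁.det := by
        rw [hprod, Real.sqrt_mul (le_of_lt hdet₁), Real.sqrt_inv]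
        ring
      rw [hsq, div_eq_mul_inv, div_eq_mul_inv, mul_inv, inv_inv]
      ring
    rw [hratio, ← mul_assoc, ← mul_assoc, mul_inv_cancel₀ hsqrt₁_pos.ne', one_mul, mul_comm]
  calc ∫ x, h x = |M.det| * ∫ x, h (M *ᵥ x) := hmain
    _ = ∫ y, |M.det| * h (M *ᵥ y) := (MeasureTheory.integral_const_mul _ _).symm
    _ = ∫ y : Fin d → ℝ,
        f (Real.sqrt (∏ i, lam i) * ptilde (∑ i, lam i * y i ^ 2) / ptilde (∑ i, y i ^ 2)) *
          ptilde (∑ i, y i ^ 2) := by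
        exact integral_congr_ae (Filter.Eventually.of_forall hpt)
end

section
/- For fixed t ∈ ℝ and x₂, x₃ ∈ ℝ, ∫_ℝ (1+x₁²+x₂²+x₃²)² / (1+(x₁−t)²+x₂²+x₃²)⁴ dx₁ = (π/(16 c^{3/2})) (8 + 16t²/c + 5t⁴/c²), where c = 1 + x₂² + x₃². -/
open MeasureTheory Real Filter Set Topology

-- limit lemmas
private lemma tendsto_term_atTop (c : ℝ) (hc : 1 ≤ c) (k : ℕ) (hk : 1 ≤ k) (t : ℝ) :
    Tendsto (fun x : ℝ => (x - t) / (c + (x - t) ^ 2) ^ k) atTop (𝓝 0) := by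
  have hc0 : (0:ℝ) < c := lt_of_lt_of_le one_pos hc
  apply tendsto_of_tendsto_of_tendsto_of_le_of_le' (tendsto_const_nhds (α := ℝ))
    ((tendsto_inv_atTop_zero).comp (tendsto_atTop_add_const_right atTop (-t) tendsto_id))
  · filter_upwards [eventually_ge_atTop (t + 1)] with x hx
    have h1 : (1:ℝ) ≤ x - t := by linarith
    positivity
  · filter_upwards [eventually_ge_atTop (t + 1)] with x hx
    have h1 : (1:ℝ) ≤ x - t := by linarith
    have h2 : (x - t)^2 ≤ (c + (x - t)^2)^k := by
      calc (x - t)^2 ≤ c + (x-t)^2 := by linarith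
        _ ≤ (c + (x-t)^2)^k := le_self_pow₀ (by nlinarith) (by omega)
    have h3 : (0:ℝ) < (x - t)^2 := by positivity
    simp only [Function.comp, id, Pi.inv_apply]
    calc (x - t) / (c + (x - t)^2)^k ≤ (x - t)/(x - t)^2 :=
          div_le_div_of_nonneg_left (by linarith) h3 h2
      _ = (x + -t)⁻¹ := by rw [sq, ← div_div, div_self (show x - t ≠ 0 by linarith), one_div, sub_eq_add_neg]

private lemma tendsto_term_atBot (c : ℝ) (hc : 1 ≤ c) (k : ℕ) (hk : 1 ≤ k) (t : ℝ) :
    Tendsto (fun x : ℝ => (x - t) / (c + (x - t) ^ 2) ^ k) atBot (𝓝 0) := by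
  have h := ((tendsto_term_atTop c hc k hk (-t)).comp tendsto_neg_atBot_atTop).neg
  rw [neg_zero] at h
  convert h using 2 with x
  simp only [Function.comp_apply]
  rw [show -x - -t = -(x - t) by ring, neg_sq, neg_div, neg_neg]

private lemma tendsto_pow_term_atTop (c : ℝ) (hc : 1 ≤ c) (k : ℕ) (hk : 1 ≤ k) (t : ℝ) :
    Tendsto (fun x : ℝ => 1 / (c + (x - t) ^ 2) ^ k) atTop (𝓝 0) := by
  simp only [one_div]
  apply Tendsto.inv_tendsto_atTop
  apply tendsto_atTop_mono (fun x => le_self_pow₀ (by nlinarith [sq_nonneg (x-t)]) (by omega))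
  apply tendsto_atTop_add_const_left
  exact (tendsto_pow_atTop (two_ne_zero)).comp (tendsto_atTop_add_const_right atTop (-t) tendsto_id)

private lemma tendsto_pow_term_atBot (c : ℝ) (hc : 1 ≤ c) (k : ℕ) (hk : 1 ≤ k) (t : ℝ) :
    Tendsto (fun x : ℝ => 1 / (c + (x - t) ^ 2) ^ k) atBot (𝓝 0) := by
  have h := (tendsto_pow_term_atTop c hc k hk (-t)).comp tendsto_neg_atBot_atTop
  convert h using 2 with x
  simp only [Function.comp_apply]
  rw [show -x - -t = -(x - t) by ring, neg_sq]

set_option maxHeartbeats 3200000 in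
private lemma cauchy_key (c t : ℝ) (hc : 1 ≤ c) :
    ∫ x : ℝ, (c + x ^ 2) ^ 2 / (c + (x - t) ^ 2) ^ 4
      = π / Real.sqrt c * (1 / (2 * c) + t ^ 2 / c ^ 2 + 5 * t ^ 4 / (16 * c ^ 3)) := by
  have hc0 : (0:ℝ) < c := lt_of_lt_of_le one_pos hc
  set s : ℝ := Real.sqrt c with hsdef
  have hs0 : 0 < s := Real.sqrt_pos.mpr hc0
  have hs2 : s ^ 2 = c := Real.sq_sqrt hc0.le
  set f : ℝ → ℝ := fun x => (c + x ^ 2) ^ 2 / (c + (x - t) ^ 2) ^ 4 with hfdef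
  set K : ℝ := 1 / (2 * c) + t ^ 2 / c ^ 2 + 5 * t ^ 4 / (16 * c ^ 3) with hKdef
  set F : ℝ → ℝ := fun x =>
      K / s * arctan ((x - t) / s)
      + K * ((x - t) / (c + (x - t) ^ 2))
      + (2 * t ^ 2 / (3 * c) + 5 * t ^ 4 / (24 * c ^ 2)) * ((x - t) / (c + (x - t) ^ 2) ^ 2)
      + (t ^ 4 / (6 * c) - 2 * t ^ 2 / 3) * ((x - t) / (c + (x - t) ^ 2) ^ 3)
      + (-t) * (1 / (c + (x - t) ^ 2) ^ 2)
      + (-2 * t ^ 3 / 3) * (1 / (c + (x - t) ^ 2) ^ 3) with hFdef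
  have hAne : ∀ x : ℝ, c + (x - t) ^ 2 ≠ 0 := fun x => by positivity
  have hA : ∀ x : ℝ, HasDerivAt (fun y : ℝ => c + (y - t) ^ 2) (2 * (x - t)) x := by
    intro x
    have := (((hasDerivAt_id x).sub_const t).pow 2).const_add c
    simpa using this
  -- derivative of F
  have hF : ∀ x : ℝ, HasDerivAt F (f x) x := by
    intro x
    have h1ne : (1 : ℝ) + ((x - t) / s) ^ 2 ≠ 0 := by positivity
    have h0 : HasDerivAt (fun y : ℝ => y - t) 1 x := by
      simpa using (hasDerivAt_id x).sub_const t
    have harc : HasDerivAt (fun y : ℝ => K / s * arctan ((y - t) / s)) (K / (c + (x - t) ^ 2)) x := by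
      have h0 : HasDerivAt (fun y : ℝ => (y - t) / s) (1 / s) x := by
        simpa using ((hasDerivAt_id x).sub_const t).div_const s
      have h := ((Real.hasDerivAt_arctan ((x - t) / s)).comp x h0).const_mul (K / s)
      convert h using 1
      · rfl
      · rfl
      · rfl
      rw [div_pow, ← hs2]
      have h2 : (s ^ 2 + (x - t) ^ 2) ≠ 0 := by positivity
      field_simp
    have hT1 : HasDerivAt (fun y : ℝ => (y - t) / (c + (y - t) ^ 2))
        ((c - (x - t) ^ 2) / (c + (x - t) ^ 2) ^ 2) x := by
      have h := h0.div (hA x) (hAne x)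
      convert h using 1
      · rfl
      · rfl
      · rfl
      ring
    have hT2 : HasDerivAt (fun y : ℝ => (y - t) / (c + (y - t) ^ 2) ^ 2)
        ((c - 3 * (x - t) ^ 2) / (c + (x - t) ^ 2) ^ 3) x := by
      have h := h0.div ((hA x).pow 2) (pow_ne_zero 2 (hAne x))
      convert h using 1
      · rfl
      · rfl
      · rfl
      simp only [Pi.pow_apply, Nat.cast_ofNat]
      field_simp
      ring
    have hT3 : HasDerivAt (fun y : ℝ => (y - t) / (c + (y - t) ^ 2) ^ 3)
        ((c - 5 * (x - t) ^ 2) / (c + (x - t) ^ 2) ^ 4) x := by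
      have h := h0.div ((hA x).pow 3) (pow_ne_zero 3 (hAne x))
      convert h using 1
      · rfl
      · rfl
      · rfl
      simp only [Pi.pow_apply, Nat.cast_ofNat]
      field_simp
      ring
    have hU2 : HasDerivAt (fun y : ℝ => 1 / (c + (y - t) ^ 2) ^ 2)
        (-4 * (x - t) / (c + (x - t) ^ 2) ^ 3) x := by
      have h := (hasDerivAt_const x (1:ℝ)).div ((hA x).pow 2) (pow_ne_zero 2 (hAne x))
      convert h using 1
      · rfl
      · rfl
      · rfl
      simp only [Pi.pow_apply, Nat.cast_ofNat]
      field_simp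
      ring
    have hU3 : HasDerivAt (fun y : ℝ => 1 / (c + (y - t) ^ 2) ^ 3)
        (-6 * (x - t) / (c + (x - t) ^ 2) ^ 4) x := by
      have h := (hasDerivAt_const x (1:ℝ)).div ((hA x).pow 3) (pow_ne_zero 3 (hAne x))
      convert h using 1
      · rfl
      · rfl
      · rfl
      simp only [Pi.pow_apply, Nat.cast_ofNat]
      field_simp
      ring
    have hsum := ((((harc.add (hT1.const_mul K)).add
        (hT2.const_mul (2 * t ^ 2 / (3 * c) + 5 * t ^ 4 / (24 * c ^ 2)))).add
        (hT3.const_mul (t ^ 4 / (6 * c) - 2 * t ^ 2 / 3))).add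
        (hU2.const_mul (-t))).add (hU3.const_mul (-2 * t ^ 3 / 3))
    convert hsum using 1
    · rfl
    · rfl
    · rfl
    rw [hKdef, hfdef]
    field_simp
    ring
  -- continuity and integrability
  have hcont : Continuous f := by
    refine Continuous.div (by fun_prop) (by fun_prop) fun x => by positivity
  have hint : Integrable f := by
    have hg : Integrable (fun x : ℝ => 4 * (1 + t ^ 2) ^ 2 * (1 + (x - t) ^ 2)⁻¹) :=
      (integrable_inv_one_add_sq.comp_sub_right t).const_mul _
    apply hg.mono' hcont.aestronglyMeasurable
    filter_upwards with x
    rw [Real.norm_eq_abs, abs_of_nonneg (by positivity)]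
    have h1 : c + x ^ 2 ≤ 2 * (1 + t ^ 2) * (c + (x - t) ^ 2) := by
      nlinarith [sq_nonneg (x - 2 * t), mul_nonneg (sub_nonneg.2 hc) (sq_nonneg t)]
    calc f x = (c + x ^ 2) ^ 2 / (c + (x - t) ^ 2) ^ 4 := rfl
      _ ≤ (2 * (1 + t ^ 2) * (c + (x - t) ^ 2)) ^ 2 / (c + (x - t) ^ 2) ^ 4 := by
          gcongr
      _ = 4 * (1 + t ^ 2) ^ 2 / (c + (x - t) ^ 2) ^ 2 := by
          have := hAne x; field_simp; ring
      _ ≤ 4 * (1 + t ^ 2) ^ 2 * (1 + (x - t) ^ 2)⁻¹ := by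
          rw [div_eq_mul_inv]
          gcongr
          nlinarith [sq_nonneg (x - t), sq_nonneg (c + (x - t) ^ 2 - 1)]
  -- limits of F at ±∞
  have harcTop : Tendsto (fun x : ℝ => arctan ((x - t) / s)) atTop (𝓝 (π / 2)) := by
    apply (tendsto_nhds_of_tendsto_nhdsWithin Real.tendsto_arctan_atTop).comp
    apply Tendsto.atTop_div_const hs0
    exact (tendsto_atTop_add_const_right atTop (-t) tendsto_id).congr (fun x => by simp only [id_eq]; ring)
  have harcBot : Tendsto (fun x : ℝ => arctan ((x - t) / s)) atBot (𝓝 (-(π / 2))) := by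
    apply (tendsto_nhds_of_tendsto_nhdsWithin Real.tendsto_arctan_atBot).comp
    apply Tendsto.atBot_div_const hs0
    exact (tendsto_atBot_add_const_right atBot (-t) tendsto_id).congr (fun x => by simp only [id_eq]; ring)
  have hFtop : Tendsto F atTop (𝓝 (K / s * (π / 2))) := by
    rw [hFdef]
    have e1 : Tendsto (fun x : ℝ => (x - t) / (c + (x - t) ^ 2)) atTop (𝓝 0) := by
      simpa using tendsto_term_atTop c hc 1 le_rfl t
    have hsum := (((((harcTop.const_mul (K / s)).add (e1.const_mul K)).add
        ((tendsto_term_atTop c hc 2 one_le_two t).const_mul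
          (2 * t ^ 2 / (3 * c) + 5 * t ^ 4 / (24 * c ^ 2)))).add
        ((tendsto_term_atTop c hc 3 (by norm_num) t).const_mul
          (t ^ 4 / (6 * c) - 2 * t ^ 2 / 3))).add
        ((tendsto_pow_term_atTop c hc 2 one_le_two t).const_mul (-t))).add
        ((tendsto_pow_term_atTop c hc 3 (by norm_num) t).const_mul (-2 * t ^ 3 / 3))
    simpa using hsum
  have hFbot : Tendsto F atBot (𝓝 (K / s * (-(π / 2)))) := by
    rw [hFdef]
    have e1 : Tendsto (fun x : ℝ => (x - t) / (c + (x - t) ^ 2)) atBot (𝓝 0) := by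
      simpa using tendsto_term_atBot c hc 1 le_rfl t
    have hsum := (((((harcBot.const_mul (K / s)).add (e1.const_mul K)).add
        ((tendsto_term_atBot c hc 2 one_le_two t).const_mul
          (2 * t ^ 2 / (3 * c) + 5 * t ^ 4 / (24 * c ^ 2)))).add
        ((tendsto_term_atBot c hc 3 (by norm_num) t).const_mul
          (t ^ 4 / (6 * c) - 2 * t ^ 2 / 3))).add
        ((tendsto_pow_term_atBot c hc 2 one_le_two t).const_mul (-t))).add
        ((tendsto_pow_term_atBot c hc 3 (by norm_num) t).const_mul (-2 * t ^ 3 / 3))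
    simpa using hsum
  -- assemble
  have hIic : ∫ x in Set.Iic (0:ℝ), f x = F 0 - K / s * (-(π / 2)) :=
    integral_Iic_of_hasDerivAt_of_tendsto' (fun x _ => hF x) hint.integrableOn hFbot
  have hIoi : ∫ x in Set.Ioi (0:ℝ), f x = K / s * (π / 2) - F 0 :=
    integral_Ioi_of_hasDerivAt_of_tendsto' (fun x _ => hF x) hint.integrableOn hFtop
  have htotal := intervalIntegral.integral_Iic_add_Ioi (b := (0:ℝ))
    hint.integrableOn hint.integrableOn (f := f) (μ := volume)
  calc ∫ x : ℝ, f x = (∫ x in Set.Iic (0:ℝ), f x) + ∫ x in Set.Ioi (0:ℝ), f x := htotal.symm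
    _ = π / s * K := by rw [hIic, hIoi]; ring
set_option maxHeartbeats 1000000 in
theorem cauchy_inner_integral (t x₂ x₃ : ℝ) :
    ∫ x₁ : ℝ,
        (1 + x₁ ^ 2 + x₂ ^ 2 + x₃ ^ 2) ^ 2 /
          (1 + (x₁ - t) ^ 2 + x₂ ^ 2 + x₃ ^ 2) ^ 4 =
      Real.pi / (16 * (1 + x₂ ^ 2 + x₃ ^ 2) ^ ((3 : ℝ) / 2)) *
        (8 + 16 * t ^ 2 / (1 + x₂ ^ 2 + x₃ ^ 2) +
          5 * t ^ 4 / (1 + x₂ ^ 2 + x₃ ^ 2) ^ 2) := by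
  have hc : (1:ℝ) ≤ 1 + x₂ ^ 2 + x₃ ^ 2 := by nlinarith [sq_nonneg x₂, sq_nonneg x₃]
  have hc0 : (0:ℝ) < 1 + x₂ ^ 2 + x₃ ^ 2 := by positivity
  have hrw : (fun x₁ : ℝ => (1 + x₁ ^ 2 + x₂ ^ 2 + x₃ ^ 2) ^ 2 /
        (1 + (x₁ - t) ^ 2 + x₂ ^ 2 + x₃ ^ 2) ^ 4)
      = fun x₁ : ℝ => ((1 + x₂ ^ 2 + x₃ ^ 2) + x₁ ^ 2) ^ 2 /
        ((1 + x₂ ^ 2 + x₃ ^ 2) + (x₁ - t) ^ 2) ^ 4 := by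
    funext x₁; ring_nf
  rw [hrw, cauchy_key (1 + x₂ ^ 2 + x₃ ^ 2) t hc]
  have hs0 : 0 < Real.sqrt (1 + x₂ ^ 2 + x₃ ^ 2) := Real.sqrt_pos.mpr hc0
  have hs2 : Real.sqrt (1 + x₂ ^ 2 + x₃ ^ 2) ^ 2 = 1 + x₂ ^ 2 + x₃ ^ 2 :=
    Real.sq_sqrt hc0.le
  have hrpow : (1 + x₂ ^ 2 + x₃ ^ 2 : ℝ) ^ ((3:ℝ)/2)
      = (1 + x₂ ^ 2 + x₃ ^ 2) * Real.sqrt (1 + x₂ ^ 2 + x₃ ^ 2) := by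
    rw [show (3:ℝ)/2 = 1 + 1/2 by norm_num, Real.rpow_add hc0, Real.rpow_one,
      ← Real.sqrt_eq_rpow]
  rw [hrpow, ← hs2]
  have hsne : Real.sqrt (1 + x₂ ^ 2 + x₃ ^ 2) ≠ 0 := hs0.ne'
  field_simp
  ring
end

section
/- The χ²-divergence between two univariate Cauchy densities with common scale s > 0 and locations l₁, l₂ equals (l₂−l₁)²/(2s²). -/
open MeasureTheory Real Filter Set Topology

/-- FTC on the whole real line. -/
lemma myFTC {F f : ℝ → ℝ} {A B : ℝ}
    (hd : ∀ x, HasDerivAt F (f x) x) (hi : Integrable f)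
    (hbot : Tendsto F atBot (𝓝 A)) (htop : Tendsto F atTop (𝓝 B)) :
    ∫ x, f x = B - A := by
  have h1 : ∫ x in Iic (0:ℝ), f x = F 0 - A :=
    integral_Iic_of_hasDerivAt_of_tendsto' (fun x _ => hd x) hi.integrableOn hbot
  have h2 : ∫ x in Ioi (0:ℝ), f x = B - F 0 :=
    integral_Ioi_of_hasDerivAt_of_tendsto' (fun x _ => hd x) hi.integrableOn htop
  rw [← intervalIntegral.integral_Iic_add_Ioi hi.integrableOn hi.integrableOn, h1, h2]; ring

/-- The Cauchy density with location `l` and scale `s`. -/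
noncomputable def cauchyPDF (l s x : ℝ) : ℝ := s / (Real.pi * (s ^ 2 + (x - l) ^ 2))

lemma cauchy_integrable (l s : ℝ) (hs : 0 < s) : Integrable (cauchyPDF l s) := by
  have h0 : Integrable fun y : ℝ => (1 + y ^ 2)⁻¹ := integrable_inv_one_add_sq
  have h1 : Integrable fun y : ℝ => (1 + (y / s) ^ 2)⁻¹ := h0.comp_div hs.ne'
  have h2 : Integrable fun x : ℝ => (1 + ((x - l) / s) ^ 2)⁻¹ := h1.comp_sub_right l
  have h3 := h2.const_mul (1 / (π * s))
  refine h3.congr (ae_of_all _ fun x => ?_)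
  have hπ := Real.pi_ne_zero
  have hd : s ^ 2 + (x - l) ^ 2 ≠ 0 := by positivity
  simp only [cauchyPDF]
  field_simp

set_option maxHeartbeats 1000000 in
lemma chiSq_integrable (s : ℝ) (hs : 0 < s) (l₁ l₂ : ℝ) :
    Integrable fun x : ℝ =>
      (cauchyPDF l₂ s x - cauchyPDF l₁ s x) ^ 2 / cauchyPDF l₁ s x := by
  have hπ : (0 : ℝ) < π := Real.pi_pos
  set C : ℝ := |l₂ - l₁| / s + (l₂ - l₁) ^ 2 / s ^ 2 with hC
  have hg12 : Integrable fun x : ℝ =>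
      s / π * (2 * (l₂ - l₁) * (x - l₂) + (l₂ - l₁) ^ 2) / (s ^ 2 + (x - l₂) ^ 2) ^ 2 := by
    refine ((cauchy_integrable l₂ s hs).const_mul C).mono ?_ (ae_of_all _ fun x => ?_)
    · refine Continuous.aestronglyMeasurable ?_
      refine Continuous.div (by continuity) (by continuity) fun x => ?_
      positivity
    · have hd : (0 : ℝ) < s ^ 2 + (x - l₂) ^ 2 := by positivity
      have habs : |2 * (l₂ - l₁) * (x - l₂) + (l₂ - l₁) ^ 2| ≤
          2 * |l₂ - l₁| * |x - l₂| + (l₂ - l₁) ^ 2 := by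
        calc |2 * (l₂ - l₁) * (x - l₂) + (l₂ - l₁) ^ 2|
            ≤ |2 * (l₂ - l₁) * (x - l₂)| + |(l₂ - l₁) ^ 2| := abs_add_le _ _
          _ = 2 * |l₂ - l₁| * |x - l₂| + (l₂ - l₁) ^ 2 := by
              rw [abs_mul, abs_mul, abs_sq]; norm_num
      have hkey : |2 * (l₂ - l₁) * (x - l₂) + (l₂ - l₁) ^ 2| ≤ C * (s ^ 2 + (x - l₂) ^ 2) := by
        refine habs.trans ?_
        have h1 : 2 * s * |x - l₂| ≤ s ^ 2 + (x - l₂) ^ 2 := by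
          nlinarith [sq_nonneg (s - |x - l₂|), sq_abs (x - l₂)]
        have h2 : s ^ 2 ≤ s ^ 2 + (x - l₂) ^ 2 := by nlinarith
        rw [hC, add_mul]
        have e1 : |l₂ - l₁| / s * (s ^ 2 + (x - l₂) ^ 2) ≥ 2 * |l₂ - l₁| * |x - l₂| := by
          rw [ge_iff_le, div_mul_eq_mul_div, le_div_iff₀ hs]
          nlinarith [mul_le_mul_of_nonneg_left h1 (abs_nonneg (l₂ - l₁))]
        have e2 : (l₂ - l₁) ^ 2 / s ^ 2 * (s ^ 2 + (x - l₂) ^ 2) ≥ (l₂ - l₁) ^ 2 := by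
          rw [ge_iff_le, div_mul_eq_mul_div, le_div_iff₀ (by positivity)]
          nlinarith [mul_le_mul_of_nonneg_left h2 (sq_nonneg (l₂ - l₁))]
        linarith
      have hCpos : 0 ≤ C := by positivity
      simp only [cauchyPDF]
      rw [Real.norm_eq_abs, Real.norm_eq_abs, abs_div, abs_mul,
        abs_of_pos (by positivity : (0:ℝ) < s / π),
        abs_of_pos (by positivity : (0:ℝ) < (s ^ 2 + (x - l₂) ^ 2) ^ 2),
        abs_of_nonneg (by positivity : (0:ℝ) ≤ C * (s / (π * (s ^ 2 + (x - l₂) ^ 2))))]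
      have step : s / π * |2 * (l₂ - l₁) * (x - l₂) + (l₂ - l₁) ^ 2| / (s ^ 2 + (x - l₂) ^ 2) ^ 2
          ≤ s / π * (C * (s ^ 2 + (x - l₂) ^ 2)) / (s ^ 2 + (x - l₂) ^ 2) ^ 2 := by
        gcongr
      refine step.trans_eq ?_
      field_simp
  have hq := cauchy_integrable l₂ s hs
  have hp := cauchy_integrable l₁ s hs
  refine ((hg12.sub hq).add hp).congr (ae_of_all _ fun x => ?_)
  show s / π * (2 * (l₂ - l₁) * (x - l₂) + (l₂ - l₁) ^ 2) / (s ^ 2 + (x - l₂) ^ 2) ^ 2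
      - cauchyPDF l₂ s x + cauchyPDF l₁ s x
    = (cauchyPDF l₂ s x - cauchyPDF l₁ s x) ^ 2 / cauchyPDF l₁ s x
  have hπ' := Real.pi_ne_zero
  have hd1 : s ^ 2 + (x - l₁) ^ 2 ≠ 0 := by positivity
  have hd2 : s ^ 2 + (x - l₂) ^ 2 ≠ 0 := by positivity
  simp only [cauchyPDF]
  field_simp
  ring

lemma abs_sub_atTop (l : ℝ) : Tendsto (fun x : ℝ => |x - l|) atTop atTop :=
  tendsto_abs_atTop_atTop.comp (tendsto_atTop_add_const_right _ (-l) tendsto_id)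

lemma abs_sub_atBot (l : ℝ) : Tendsto (fun x : ℝ => |x - l|) atBot atTop :=
  tendsto_abs_atBot_atTop.comp (tendsto_atBot_add_const_right _ (-l) tendsto_id)

lemma tendsto_inv_d {l s : ℝ} {F : Filter ℝ}
    (hF : Tendsto (fun x : ℝ => |x - l|) F atTop) :
    Tendsto (fun x : ℝ => (s ^ 2 + (x - l) ^ 2)⁻¹) F (𝓝 0) := by
  apply squeeze_zero_norm' (a := fun x : ℝ => |x - l|⁻¹)
  · filter_upwards [hF.eventually_ge_atTop 1] with x hx
    have h0 : (0 : ℝ) < |x - l| := lt_of_lt_of_le one_pos hx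
    have hd : (0 : ℝ) < s ^ 2 + (x - l) ^ 2 := by nlinarith [sq_abs (x - l)]
    rw [Real.norm_eq_abs, abs_of_pos (inv_pos.2 hd)]
    apply inv_anti₀ h0
    nlinarith [sq_abs (x - l)]
  · exact tendsto_inv_atTop_zero.comp hF

lemma tendsto_u_div {l s : ℝ} {F : Filter ℝ}
    (hF : Tendsto (fun x : ℝ => |x - l|) F atTop) :
    Tendsto (fun x : ℝ => (x - l) / (s ^ 2 + (x - l) ^ 2)) F (𝓝 0) := by
  apply squeeze_zero_norm' (a := fun x : ℝ => |x - l|⁻¹)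
  · filter_upwards [hF.eventually_ge_atTop 1] with x hx
    have h0 : (0 : ℝ) < |x - l| := lt_of_lt_of_le one_pos hx
    have hd : (0 : ℝ) < s ^ 2 + (x - l) ^ 2 := by nlinarith [sq_abs (x - l)]
    rw [Real.norm_eq_abs, abs_div, abs_of_pos hd, div_le_iff₀ hd, inv_mul_eq_div,
      le_div_iff₀ h0]
    nlinarith [sq_abs (x - l)]
  · exact tendsto_inv_atTop_zero.comp hF

lemma tendsto_arctan_comp_top {l s : ℝ} (hs : 0 < s) :
    Tendsto (fun x : ℝ => arctan ((x - l) / s)) atTop (𝓝 (π / 2)) := by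
  have h1 : Tendsto (fun x : ℝ => (x - l) / s) atTop atTop :=
    (tendsto_atTop_add_const_right _ (-l) tendsto_id).atTop_div_const hs
  exact (tendsto_arctan_atTop.mono_right nhdsWithin_le_nhds).comp h1

lemma tendsto_arctan_comp_bot {l s : ℝ} (hs : 0 < s) :
    Tendsto (fun x : ℝ => arctan ((x - l) / s)) atBot (𝓝 (-(π / 2))) := by
  have h1 : Tendsto (fun x : ℝ => (x - l) / s) atBot atBot :=
    (tendsto_atBot_add_const_right _ (-l) tendsto_id).atBot_div_const hs
  exact (tendsto_arctan_atBot.mono_right nhdsWithin_le_nhds).comp h1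

set_option maxHeartbeats 1000000 in
theorem chiSq_cauchy_same_scale (s : ℝ) (hs : 0 < s) (l₁ l₂ : ℝ) :
    (∫ x : ℝ, (cauchyPDF l₂ s x - cauchyPDF l₁ s x) ^ 2 / cauchyPDF l₁ s x) =
      (l₂ - l₁) ^ 2 / (2 * s ^ 2) := by
  have hπ : (0 : ℝ) < π := Real.pi_pos
  set H : ℝ → ℝ := fun x =>
      s / π * (-(l₂ - l₁) * (s ^ 2 + (x - l₂) ^ 2)⁻¹
        + (l₂ - l₁) ^ 2 / (2 * s ^ 2) * ((x - l₂) / (s ^ 2 + (x - l₂) ^ 2))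
        + (l₂ - l₁) ^ 2 / (2 * s ^ 3) * arctan ((x - l₂) / s)
        - 1 / s * arctan ((x - l₂) / s)
        + 1 / s * arctan ((x - l₁) / s)) with hHdef
  have hderiv : ∀ x, HasDerivAt H
      ((cauchyPDF l₂ s x - cauchyPDF l₁ s x) ^ 2 / cauchyPDF l₁ s x) x := by
    intro x
    have hπ' : (π : ℝ) ≠ 0 := Real.pi_ne_zero
    have hne₁ : s ^ 2 + (x - l₁) ^ 2 ≠ 0 := by positivity
    have hne₂ : s ^ 2 + (x - l₂) ^ 2 ≠ 0 := by positivity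
    have hd2 : HasDerivAt (fun x : ℝ => s ^ 2 + (x - l₂) ^ 2) (2 * (x - l₂)) x := by
      have := (((hasDerivAt_id x).sub_const l₂).pow 2).const_add (s ^ 2)
      simpa using this
    have ht1 := (hd2.inv hne₂).const_mul (-(l₂ - l₁))
    have ht2 := (((hasDerivAt_id x).sub_const l₂).div hd2 hne₂).const_mul
      ((l₂ - l₁) ^ 2 / (2 * s ^ 2))
    have harc₂ : HasDerivAt (fun x : ℝ => arctan ((x - l₂) / s))
        (1 / (1 + ((x - l₂) / s) ^ 2) * (1 / s)) x := by
      simpa using (((hasDerivAt_id x).sub_const l₂).div_const s).arctan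
    have harc₁ : HasDerivAt (fun x : ℝ => arctan ((x - l₁) / s))
        (1 / (1 + ((x - l₁) / s) ^ 2) * (1 / s)) x := by
      simpa using (((hasDerivAt_id x).sub_const l₁).div_const s).arctan
    have ht3 := harc₂.const_mul ((l₂ - l₁) ^ 2 / (2 * s ^ 3))
    have ht4 := harc₂.const_mul (1 / s)
    have ht5 := harc₁.const_mul (1 / s)
    have hraw := ((((ht1.add ht2).add ht3).sub ht4).add ht5).const_mul (s / π)
    refine hraw.congr_deriv ?_
    have h1 : 1 + ((x - l₂) / s) ^ 2 ≠ 0 := by positivity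
    have h2 : 1 + ((x - l₁) / s) ^ 2 ≠ 0 := by positivity
    simp only [cauchyPDF, id]
    field_simp
    ring
  have htop : Tendsto H atTop (𝓝 ((l₂ - l₁) ^ 2 / (4 * s ^ 2))) := by
    have e1 := (tendsto_inv_d (s := s) (abs_sub_atTop l₂)).const_mul (-(l₂ - l₁))
    have e2 := (tendsto_u_div (s := s) (abs_sub_atTop l₂)).const_mul ((l₂ - l₁) ^ 2 / (2 * s ^ 2))
    have e3 := (tendsto_arctan_comp_top (l := l₂) hs).const_mul ((l₂ - l₁) ^ 2 / (2 * s ^ 3))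
    have e4 := (tendsto_arctan_comp_top (l := l₂) hs).const_mul (1 / s)
    have e5 := (tendsto_arctan_comp_top (l := l₁) hs).const_mul (1 / s)
    have := ((((e1.add e2).add e3).sub e4).add e5).const_mul (s / π)
    rw [hHdef]
    convert this using 2
    field_simp
    ring
  have hbot : Tendsto H atBot (𝓝 (-((l₂ - l₁) ^ 2 / (4 * s ^ 2)))) := by
    have e1 := (tendsto_inv_d (s := s) (abs_sub_atBot l₂)).const_mul (-(l₂ - l₁))
    have e2 := (tendsto_u_div (s := s) (abs_sub_atBot l₂)).const_mul ((l₂ - l₁) ^ 2 / (2 * s ^ 2))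
    have e3 := (tendsto_arctan_comp_bot (l := l₂) hs).const_mul ((l₂ - l₁) ^ 2 / (2 * s ^ 3))
    have e4 := (tendsto_arctan_comp_bot (l := l₂) hs).const_mul (1 / s)
    have e5 := (tendsto_arctan_comp_bot (l := l₁) hs).const_mul (1 / s)
    have := ((((e1.add e2).add e3).sub e4).add e5).const_mul (s / π)
    rw [hHdef]
    convert this using 2
    field_simp
    ring
  rw [myFTC hderiv (chiSq_integrable s hs l₁ l₂) hbot htop]
  field_simp
  ring
end
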